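/- Let f be a 1-periodic piecewise-linear function, injective and monotone on [0,1), with ℓ pieces whose slopes have μ distinct magnitudes, and suppose the slopes of the first piece f₁ and last piece f_ℓ are equal. Then for all α ∈ ℝ and N ∈ ℕ, |G_{f,α,N}| ≤ 3μ + ℓ - 1; in particular, the extremal gap length of f equals an interior gap length whenever the maximal number of interior gap lengths occurs. -/

import Mathlib

set_option linter.unusedSectionVars false
set_option maxHeartbeats 1000000

/-- The set of distinct values `f (d*α + β)` for `1 ≤ d ≤ N`. -/
def orbitSet (f : ℝ → ℝ) (α β : ℝ) (N : ℕ) : Set ℝ :=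
  {y | ∃ d : ℕ, 1 ≤ d ∧ d ≤ N ∧ y = f (d * α + β)}

/-- Gaps between consecutive (nearest-neighbor) elements of a set of reals. -/
def consGaps (S : Set ℝ) : Set ℝ :=
  {g | ∃ a ∈ S, ∃ b ∈ S, a < b ∧ (∀ x ∈ S, x ≤ a ∨ b ≤ x) ∧ g = b - a}

/-- The gap length set `G_{f,α,β,N}`: consecutive gaps together with the
extremal gap `s₁ - inf f + sup f - s_n`. -/
def gapSet (f : ℝ → ℝ) (α β : ℝ) (N : ℕ) : Set ℝ :=
  consGaps (orbitSet f α β N) ∪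
    {sInf (orbitSet f α β N) - sInf (Set.range f) + sSup (Set.range f) -
      sSup (orbitSet f α β N)}

noncomputable section ThreeGapCore

/-- fractional part of `k*α` -/
def frA (α : ℝ) (k : ℤ) : ℝ := Int.fract (k * α)

/-- circular distance `(0,1]` version -/
def valA (α : ℝ) (k : ℤ) : ℝ := if frA α k = 0 then 1 else frA α k

def IdxI (N : ℕ) : Finset ℤ := Finset.Icc 1 (N : ℤ)

/-- `j` attains the minimal positive circular distance from `i` among indices. -/
def SuccI (α : ℝ) (N : ℕ) (i j : ℤ) : Prop :=
  i ∈ IdxI N ∧ j ∈ IdxI N ∧ ∀ e ∈ IdxI N, valA α (j - i) ≤ valA α (e - i)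

namespace TGC

variable {α : ℝ} {N : ℕ}

lemma frA_nonneg (α : ℝ) (k : ℤ) : 0 ≤ frA α k := Int.fract_nonneg _
lemma frA_lt_one (α : ℝ) (k : ℤ) : frA α k < 1 := Int.fract_lt_one _

lemma valA_pos (α : ℝ) (k : ℤ) : 0 < valA α k := by
  unfold valA
  split_ifs with h
  · norm_num
  · exact lt_of_le_of_ne (frA_nonneg α k) (Ne.symm h)

lemma valA_le_one (α : ℝ) (k : ℤ) : valA α k ≤ 1 := by
  unfold valA
  split_ifs with h
  · exact le_refl 1
  · exact (frA_lt_one α k).le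

lemma valA_zero (α : ℝ) : valA α 0 = 1 := by
  unfold valA frA
  norm_num

lemma valA_congr (α : ℝ) (k : ℤ) : ∃ z : ℤ, (k : ℝ) * α - valA α k = z := by
  unfold valA frA
  split_ifs with h
  · refine ⟨⌊(k:ℝ)*α⌋ - 1, ?_⟩
    have : (k:ℝ)*α - ⌊(k:ℝ)*α⌋ = 0 := h
    push_cast
    linarith
  · exact ⟨⌊(k:ℝ)*α⌋, by rw [Int.fract]; ring⟩

/-- central computation engine -/
lemma valA_eq_of {k : ℤ} {x : ℝ} (h0 : 0 < x) (h1 : x ≤ 1)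
    (hc : ∃ z : ℤ, (k : ℝ) * α - x = z) : valA α k = x := by
  obtain ⟨z, hz⟩ := hc
  have hfr : frA α k = Int.fract x := by
    unfold frA
    rw [Int.fract_eq_fract]
    exact ⟨z, hz⟩
  rcases eq_or_lt_of_le h1 with h1 | h1
  · have : Int.fract x = 0 := by rw [h1]; norm_num [Int.fract]
    unfold valA
    rw [hfr, this]
    simp [h1.symm]
  · have hx : Int.fract x = x := Int.fract_eq_self.mpr ⟨h0.le, h1⟩
    unfold valA
    rw [hfr, hx]
    simp [ne_of_gt h0]

lemma frA_neg {k : ℤ} (h : frA α k ≠ 0) : frA α (-k) = 1 - frA α k := by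
  unfold frA at *
  push_cast
  rw [neg_mul, Int.fract_neg h]

section CaseA

/-- Case A hypothesis: no multiple `k*α` with `0<|k|<N` is an integer. -/
def HypA (α : ℝ) (N : ℕ) : Prop := ∀ k : ℤ, 1 ≤ k → k ≤ (N:ℤ) - 1 → frA α k ≠ 0

variable (hA : HypA α N) (hN : 2 ≤ N)
include hA hN

lemma frA_ne_zero {k : ℤ} (hk : k ≠ 0) (hk' : |k| ≤ (N:ℤ) - 1) : frA α k ≠ 0 := by
  rcases lt_or_gt_of_ne hk with h | h
  · have h1 : 1 ≤ -k := by omega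
    have h2 : -k ≤ (N:ℤ) - 1 := by rw [abs_of_neg h] at hk'; exact hk'
    have := hA (-k) h1 h2
    intro hzero
    have : frA α (-(-k)) = 1 - frA α (-k) := frA_neg this
    rw [neg_neg] at this
    rw [hzero] at this
    have := frA_lt_one α (-k)
    linarith
  · exact hA k (by omega) (by rw [abs_of_pos h] at hk'; exact hk')

lemma valA_eq_frA {i j : ℤ} (hi : i ∈ IdxI N) (hj : j ∈ IdxI N) (hne : j ≠ i) :
    valA α (j - i) = frA α (j - i) := by
  simp only [IdxI, Finset.mem_Icc] at hi hj
  have := frA_ne_zero hA hN (k := j - i) (by omega) (abs_le.mpr ⟨by omega, by omega⟩)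
  unfold valA
  simp [this]

lemma valA_lt_one {i j : ℤ} (hi : i ∈ IdxI N) (hj : j ∈ IdxI N) (hne : j ≠ i) :
    valA α (j - i) < 1 := by
  rw [valA_eq_frA hA hN hi hj hne]; exact frA_lt_one α _

lemma succ_ne {i j : ℤ} (hS : SuccI α N i j) : j ≠ i := by
  obtain ⟨hi, _, hmin⟩ := hS
  rintro rfl
  simp only [IdxI, Finset.mem_Icc] at hi
  have he : (if j = 1 then 2 else 1 : ℤ) ∈ IdxI N := by
    simp only [IdxI, Finset.mem_Icc]; split_ifs <;> omega
  have hne : (if j = 1 then 2 else 1 : ℤ) ≠ j := by split_ifs with h <;> omega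
  have h1 := hmin _ he
  rw [sub_self, valA_zero] at h1
  have h2 := valA_lt_one hA hN (by simp only [IdxI, Finset.mem_Icc]; omega) he hne
  linarith

/-- the circular successor value is well-defined: any two minimizers give the same value -/
lemma succ_val_unique {i j j' : ℤ} (h : SuccI α N i j) (h' : SuccI α N i j') :
    valA α (j - i) = valA α (j' - i) :=
  le_antisymm (h.2.2 j' h'.2.1) (h'.2.2 j h.2.1)

/-- the circular predecessor is unique. -/
lemma pred_unique {i i' j : ℤ} (h : SuccI α N i j) (h' : SuccI α N i' j) : i = i' := by
  by_contra hne
  have hij := succ_ne hA hN h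
  have hij' := succ_ne hA hN h'
  set B := valA α (j - i) with hB
  set B' := valA α (j - i') with hB'
  set A := valA α (i' - i) with hAdef
  have hApos : 0 < A := valA_pos α _
  have hAlt : A < 1 := valA_lt_one hA hN h.1 h'.1 (Ne.symm hne)
  have hBpos : 0 < B := valA_pos α _
  have hBlt : B < 1 := valA_lt_one hA hN h.1 h.2.1 hij
  have hB'pos : 0 < B' := valA_pos α _
  have hAB : B ≤ A := h.2.2 i' h'.1
  rcases eq_or_lt_of_le hAB with hABeq | hABlt
  · -- B = A forces j = i'
    have h1 : frA α (j - i) = frA α (i' - i) := by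
      rw [← valA_eq_frA hA hN h.1 h.2.1 hij, ← valA_eq_frA hA hN h.1 h'.1 (Ne.symm hne)]
      exact hABeq
    have h2 : frA α (j - i') = 0 := by
      unfold frA at h1 ⊢
      rw [Int.fract_eq_fract] at h1
      obtain ⟨z, hz⟩ := h1
      push_cast at hz ⊢
      have expand : ((j:ℝ) - ↑i) * α - ((i':ℝ) - ↑i) * α = ((j:ℝ) - ↑i') * α := by ring
      rw [show ((j:ℝ) - ↑i') * α = (z:ℝ) by linarith]
      simp
    have hji' : j = i' := by
      by_contra hji'
      have hiI := h.1; have hi'I := h'.1; have hjI := h.2.1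
      simp only [IdxI, Finset.mem_Icc] at hiI hi'I hjI
      exact frA_ne_zero hA hN (k := j - i') (by omega)
        (abs_le.mpr ⟨by omega, by omega⟩) h2
    -- then SuccI i' j = SuccI j j, contradicting succ_ne
    exact hij' hji'
  · -- B < A : then B' = B - A + 1 and the condition at e = i gives contradiction
    have hBA' : B' = B - A + 1 := by
      apply valA_eq_of (by linarith) (by linarith)
      obtain ⟨z1, hz1⟩ := valA_congr α (j - i)
      obtain ⟨z2, hz2⟩ := valA_congr α (i' - i)
      refine ⟨z1 - z2 - 1, ?_⟩
      push_cast at hz1 hz2 ⊢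
      rw [← hB] at hz1
      rw [← hAdef] at hz2
      have expand : ((j:ℝ) - ↑i) * α - ((i':ℝ) - ↑i) * α = ((j:ℝ) - ↑i') * α := by ring
      linarith
    have hcond : valA α (i - i') ≥ B' := h'.2.2 i h.1
    have : valA α (i - i') = 1 - A := by
      apply valA_eq_of (by linarith) (by linarith)
      obtain ⟨z2, hz2⟩ := valA_congr α (i' - i)
      refine ⟨-z2 - 1, ?_⟩
      push_cast at hz2 ⊢
      rw [← hAdef] at hz2
      have expand : ((i:ℝ) - ↑i') * α = -(((i':ℝ) - ↑i) * α) := by ring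
      linarith
    rw [this] at hcond
    linarith

lemma chain {i j : ℤ} (hi2 : 2 ≤ i) (hj2 : 2 ≤ j) (hS : SuccI α N i j) :
    SuccI α N (i-1) (j-1) ∨
    (SuccI α N (i-1) N ∧ SuccI α N N (j-1) ∧
      valA α (j - i) = valA α ((N:ℤ) - (i-1)) + valA α ((j-1) - (N:ℤ))) := by
  obtain ⟨hiI, hjI, hmin⟩ := hS
  have hiN : i ≤ (N:ℤ) := (Finset.mem_Icc.mp hiI).2
  have hjN : j ≤ (N:ℤ) := (Finset.mem_Icc.mp hjI).2
  have hji : j ≠ i := succ_ne hA hN ⟨hiI, hjI, hmin⟩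
  have hi1I : i - 1 ∈ IdxI N := by simp only [IdxI, Finset.mem_Icc]; omega
  have hj1I : j - 1 ∈ IdxI N := by simp only [IdxI, Finset.mem_Icc]; omega
  have hNI : (N:ℤ) ∈ IdxI N := by simp only [IdxI, Finset.mem_Icc]; omega
  set g := valA α (j - i) with hgdef
  have hgpos : 0 < g := valA_pos α _
  have hglt : g < 1 := valA_lt_one hA hN hiI hjI hji
  have key : ∀ e ∈ IdxI N, e ≤ (N:ℤ) - 1 → g ≤ valA α (e - (i-1)) := by
    intro e heI he
    have he1 : e + 1 ∈ IdxI N := by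
      simp only [IdxI, Finset.mem_Icc] at heI ⊢; omega
    have := hmin (e+1) he1
    rw [show e + 1 - i = e - (i-1) by ring] at this
    exact this
  by_cases hsplit : g ≤ valA α ((N:ℤ) - (i-1))
  · left
    refine ⟨hi1I, hj1I, ?_⟩
    intro e heI
    rw [show j - 1 - (i-1) = j - i by ring]
    rcases eq_or_lt_of_le (Finset.mem_Icc.mp heI).2 with heN | heN
    · rw [heN]; exact hsplit
    · exact key e heI (by omega)
  · right
    push_neg at hsplit
    set a := valA α ((N:ℤ) - (i-1)) with hadef
    have hapos : 0 < a := valA_pos α _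
    have hNi1 : (N:ℤ) ≠ i - 1 := by omega
    have halt : a < 1 := valA_lt_one hA hN hi1I hNI hNi1
    have hj1N : j - 1 ≠ (N:ℤ) ∨ True := Or.inr trivial
    set b := valA α ((j-1) - (N:ℤ)) with hbdef
    obtain ⟨z1, hz1⟩ := valA_congr α (j - i)
    obtain ⟨z2, hz2⟩ := valA_congr α ((N:ℤ) - (i-1))
    rw [← hgdef] at hz1
    rw [← hadef] at hz2
    push_cast at hz1 hz2
    have hb : b = g - a := by
      apply valA_eq_of (by linarith) (by linarith)
      refine ⟨z1 - z2, ?_⟩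
      push_cast
      have expand : ((j:ℝ) - 1 - (N:ℝ)) * α = ((j:ℝ) - i) * α - ((N:ℝ) - ((i:ℝ) - 1)) * α := by
        ring
      linarith
    have hS1 : SuccI α N (i-1) (N:ℤ) := by
      refine ⟨hi1I, hNI, ?_⟩
      intro e heI
      rcases eq_or_lt_of_le (Finset.mem_Icc.mp heI).2 with heN | heN
      · rw [heN]
      · have := key e heI (by omega)
        linarith
    have hS2 : SuccI α N (N:ℤ) (j-1) := by
      refine ⟨hNI, hj1I, ?_⟩
      intro e heI
      by_contra hc
      push_neg at hc
      rw [← hbdef] at hc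
      have heN : e ≠ (N:ℤ) := by
        rintro rfl
        rw [sub_self, valA_zero] at hc
        have := valA_le_one α ((j-1) - (N:ℤ))
        rw [← hbdef] at this
        linarith
      have heN' : e ≤ (N:ℤ) - 1 := by
        have := (Finset.mem_Icc.mp heI).2; omega
      set c := valA α (e - (N:ℤ)) with hcdef
      have hcpos : 0 < c := valA_pos α _
      obtain ⟨z3, hz3⟩ := valA_congr α (e - (N:ℤ))
      rw [← hcdef] at hz3
      push_cast at hz3
      by_cases hei : e = i - 1
      · -- c = 1 - a, contradiction with c < b = g - a and g ≤ 1
        have hc1a : c = 1 - a := by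
          rw [hcdef, hei]
          apply valA_eq_of (by linarith) (by linarith)
          refine ⟨-z2 - 1, ?_⟩
          push_cast
          have expand : ((i:ℝ) - 1 - (N:ℝ)) * α = -(((N:ℝ) - ((i:ℝ) - 1)) * α) := by ring
          linarith
        rw [hc1a, hb] at hc
        linarith
      · -- valA (e - (i-1)) = a + c < g, contradicting key
        have hval : valA α (e - (i-1)) = a + c := by
          apply valA_eq_of (by linarith) (by nlinarith [hb, hc])
          refine ⟨z2 + z3, ?_⟩
          push_cast
          have expand : ((e:ℝ) - ((i:ℝ) - 1)) * α
              = ((N:ℝ) - ((i:ℝ) - 1)) * α + ((e:ℝ) - (N:ℝ)) * α := by ring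
          linarith
        have := key e heI heN'
        rw [hval] at this
        rw [hb] at hc
        linarith
    exact ⟨hS1, hS2, by linarith [hb]⟩

lemma descent : ∀ n : ℕ, ∀ i j : ℤ, i ≤ (n:ℤ) → SuccI α N i j →
    (∃ j', SuccI α N 1 j' ∧ valA α (j - i) = valA α (j' - 1)) ∨
    (∃ i', SuccI α N i' 1 ∧ valA α (j - i) = valA α (1 - i')) ∨
    (∃ p q, SuccI α N p (N:ℤ) ∧ SuccI α N (N:ℤ) q ∧
      valA α (j - i) = valA α ((N:ℤ) - p) + valA α (q - (N:ℤ))) := by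
  intro n
  induction n using Nat.strong_induction_on with
  | _ n IH =>
    intro i j hin hS
    have hi1 : 1 ≤ i := (Finset.mem_Icc.mp hS.1).1
    have hj1 : 1 ≤ j := (Finset.mem_Icc.mp hS.2.1).1
    rcases eq_or_lt_of_le hi1 with hi | hi
    · left
      exact ⟨j, by rwa [hi], by rw [← hi]⟩
    · rcases eq_or_lt_of_le hj1 with hj | hj
      · right; left
        exact ⟨i, by rwa [hj], by rw [← hj]⟩
      · rcases chain hA hN (by omega) (by omega) hS with h1 | ⟨hp, hq, hval⟩
        · have hn2 : 2 ≤ n := by omega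
          have := IH (n-1) (by omega) (i-1) (j-1) (by omega) h1
          rw [show j - 1 - (i-1) = j - i by ring] at this
          exact this
        · right; right
          exact ⟨i-1, j-1, hp, hq, hval⟩

theorem caseA_three_gap :
    ∃ T : Finset ℝ, T.card ≤ 3 ∧ ∀ i j, SuccI α N i j → valA α (j - i) ∈ T := by
  classical
  set t1 : ℝ := if h : ∃ j', SuccI α N 1 j' then valA α (h.choose - 1) else 0 with ht1
  set t2 : ℝ := if h : ∃ i', SuccI α N i' 1 then valA α (1 - h.choose) else 0 with ht2
  set t3 : ℝ := (if h : ∃ p, SuccI α N p (N:ℤ) then valA α ((N:ℤ) - h.choose) else 0)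
    + (if h : ∃ q, SuccI α N (N:ℤ) q then valA α (h.choose - (N:ℤ)) else 0) with ht3
  refine ⟨{t1, t2, t3}, ?_, ?_⟩
  · apply le_trans (Finset.card_insert_le _ _)
    have := Finset.card_insert_le t2 ({t3} : Finset ℝ)
    simp only [Finset.card_singleton] at this ⊢
    omega
  · intro i j hS
    have hiN : i ≤ (N:ℤ) := (Finset.mem_Icc.mp hS.1).2
    rcases descent hA hN (i.toNat) i j (by omega) hS with ⟨j', hj', heq⟩ | ⟨i', hi', heq⟩
      | ⟨p, q, hp, hq, heq⟩
    · have h : ∃ j', SuccI α N 1 j' := ⟨j', hj'⟩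
      have : t1 = valA α (j' - 1) := by
        rw [ht1, dif_pos h]
        exact succ_val_unique hA hN h.choose_spec hj'
      simp [Finset.mem_insert, this, heq]
    · have h : ∃ i', SuccI α N i' 1 := ⟨i', hi'⟩
      have : t2 = valA α (1 - i') := by
        rw [ht2, dif_pos h]
        rw [pred_unique hA hN h.choose_spec hi']
      simp [Finset.mem_insert, this, heq]
    · have h1 : ∃ p, SuccI α N p (N:ℤ) := ⟨p, hp⟩
      have h2 : ∃ q, SuccI α N (N:ℤ) q := ⟨q, hq⟩
      have : t3 = valA α ((N:ℤ) - p) + valA α (q - (N:ℤ)) := by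
        rw [ht3, dif_pos h1, dif_pos h2, pred_unique hA hN h1.choose_spec hp,
          succ_val_unique hA hN h2.choose_spec hq]
      simp [Finset.mem_insert, this, heq]

end CaseA

section CaseB

variable {k₀ : ℤ} (hk1 : 1 ≤ k₀) (hk0 : frA α k₀ = 0)
include hk1 hk0

lemma frA_int : ∃ z₀ : ℤ, (k₀:ℝ) * α = z₀ := by
  refine ⟨⌊(k₀:ℝ)*α⌋, ?_⟩
  have : Int.fract ((k₀:ℝ)*α) = 0 := hk0
  rw [Int.fract] at this
  linarith

lemma valA_period (x n : ℤ) : valA α (x + n * k₀) = valA α x := by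
  obtain ⟨z₀, hz₀⟩ := frA_int hk1 hk0
  have : frA α (x + n * k₀) = frA α x := by
    unfold frA
    push_cast
    rw [show ((x:ℝ) + (n:ℝ) * (k₀:ℝ)) * α = (x:ℝ) * α + (n:ℝ) * ((k₀:ℝ) * α) by ring, hz₀,
      show (x:ℝ) * α + (n:ℝ) * (z₀:ℝ) = (x:ℝ) * α + ((n * z₀ : ℤ) : ℝ) by push_cast; ring,
      Int.fract_add_intCast]
  unfold valA
  rw [this]

variable (hk2 : k₀ ≤ (N:ℤ) - 1)
include hk2

theorem caseB_three_gap :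
    ∃ T : Finset ℝ, T.card ≤ 3 ∧ ∀ i j, SuccI α N i j → valA α (j - i) ∈ T := by
  have hRne : (Finset.Icc (0:ℤ) (k₀-1)).Nonempty := ⟨0, by simp only [Finset.mem_Icc]; omega⟩
  have hne : ((Finset.Icc (0:ℤ) (k₀-1)).image (valA α)).Nonempty := hRne.image _
  set w := ((Finset.Icc (0:ℤ) (k₀-1)).image (valA α)).min' hne with hw
  refine ⟨{w}, by simp, ?_⟩
  intro i j hS
  obtain ⟨hiI, hjI, hmin⟩ := hS
  have hle : valA α (j - i) ≤ w := by
    obtain ⟨r, hrI, hr⟩ := Finset.mem_image.mp (Finset.min'_mem _ hne)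
    set e := 1 + ((i + r - 1) % k₀) with he
    have hemod1 : 0 ≤ (i + r - 1) % k₀ := Int.emod_nonneg _ (by omega)
    have hemod2 : (i + r - 1) % k₀ < k₀ := Int.emod_lt_of_pos _ (by omega)
    have heI : e ∈ IdxI N := by simp only [IdxI, Finset.mem_Icc]; omega
    have heval : valA α (e - i) = valA α r := by
      have : e - i = r + (-(((i + r - 1) / k₀))) * k₀ := by
        rw [he]
        have := Int.emod_add_mul_ediv (i + r - 1) k₀
        push_cast
        linarith [Int.emod_add_mul_ediv (i + r - 1) k₀]
      rw [this, valA_period hk1 hk0]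
    calc valA α (j - i) ≤ valA α (e - i) := hmin e heI
      _ = valA α r := heval
      _ = w := hr
  have hge : w ≤ valA α (j - i) := by
    have hrI : (j - i) % k₀ ∈ Finset.Icc (0:ℤ) (k₀-1) := by
      simp only [Finset.mem_Icc]
      exact ⟨Int.emod_nonneg _ (by omega), by linarith [Int.emod_lt_of_pos (j-i) (by omega : (0:ℤ) < k₀)]⟩
    have heq : valA α (j - i) = valA α ((j - i) % k₀) := by
      conv_lhs => rw [show j - i = (j - i) % k₀ + ((j-i)/k₀) * k₀ by
        have := Int.emod_add_mul_ediv (j - i) k₀; linarith]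
      rw [valA_period hk1 hk0]
    rw [heq]
    exact Finset.min'_le _ _ (Finset.mem_image_of_mem _ hrI)
  simp [le_antisymm hle hge]

end CaseB

/-- The three-gap theorem, index form: circular nearest-neighbor distances among
`{frac(d*α) : 1 ≤ d ≤ N}` take at most three values. -/
theorem three_gap (α : ℝ) (N : ℕ) :
    ∃ T : Finset ℝ, T.card ≤ 3 ∧ ∀ i j, SuccI α N i j → valA α (j - i) ∈ T := by
  rcases Nat.lt_or_ge N 2 with hN | hN
  · interval_cases N
    · exact ⟨∅, by simp, fun i j hS => absurd hS.1 (by simp [IdxI])⟩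
    · refine ⟨{1}, by simp, fun i j hS => ?_⟩
      have hi := Finset.mem_Icc.mp hS.1
      have hj := Finset.mem_Icc.mp hS.2.1
      have : i = 1 ∧ j = 1 := by omega
      simp [this.1, this.2, valA_zero]
  · by_cases hB : ∃ k : ℤ, 1 ≤ k ∧ k ≤ (N:ℤ) - 1 ∧ frA α k = 0
    · obtain ⟨k, hk1, hk2, hk0⟩ := hB
      exact caseB_three_gap hk1 hk0 hk2
    · push_neg at hB
      exact caseA_three_gap (fun k h1 h2 => hB k h1 h2) hN

end TGC

open TGC

/-- The finite set `{frac(d*α) : 1 ≤ d ≤ N}`. -/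
def DFin (α : ℝ) (N : ℕ) : Finset ℝ :=
  (Finset.Icc (1:ℤ) (N:ℤ)).image (fun d : ℤ => Int.fract ((d:ℝ) * α))

namespace DF

variable {α : ℝ} {N : ℕ}

lemma mem_DFin {u : ℝ} : u ∈ DFin α N ↔ ∃ d ∈ IdxI N, Int.fract ((d:ℝ) * α) = u := by
  simp [DFin, IdxI]

lemma nonneg_of_mem {u : ℝ} (hu : u ∈ DFin α N) : 0 ≤ u := by
  obtain ⟨d, _, hd⟩ := mem_DFin.mp hu
  rw [← hd]; exact Int.fract_nonneg _

lemma lt_one_of_mem {u : ℝ} (hu : u ∈ DFin α N) : u < 1 := by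
  obtain ⟨d, _, hd⟩ := mem_DFin.mp hu
  rw [← hd]; exact Int.fract_lt_one _

/-- `valA α (e - i)` is the circular distance from `x_i` up to `x_e`. -/
lemma valA_eq_cv {i e : ℤ} :
    valA α (e - i) = (if Int.fract (Int.fract ((e:ℝ)*α) - Int.fract ((i:ℝ)*α)) = 0 then 1
      else Int.fract (Int.fract ((e:ℝ)*α) - Int.fract ((i:ℝ)*α))) := by
  have hfr : frA α (e - i) = Int.fract (Int.fract ((e:ℝ)*α) - Int.fract ((i:ℝ)*α)) := by
    unfold frA
    rw [Int.fract_eq_fract]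
    refine ⟨⌊(e:ℝ)*α⌋ - ⌊(i:ℝ)*α⌋, ?_⟩
    rw [Int.fract, Int.fract]
    push_cast
    ring
  unfold valA
  rw [hfr]

/-- interior adjacent pairs of `DFin` realize a circular successor distance. -/
lemma adjacent_succ {u v : ℝ} (hu : u ∈ DFin α N) (hv : v ∈ DFin α N) (huv : u < v)
    (hadj : ∀ w ∈ DFin α N, w ≤ u ∨ v ≤ w) :
    ∃ i j, SuccI α N i j ∧ v - u = valA α (j - i) := by
  obtain ⟨i, hiI, hi⟩ := mem_DFin.mp hu
  obtain ⟨j, hjI, hj⟩ := mem_DFin.mp hv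
  have hu0 : 0 ≤ u := nonneg_of_mem hu
  have hu1 : u < 1 := lt_one_of_mem hu
  have hv0 : 0 ≤ v := nonneg_of_mem hv
  have hv1 : v < 1 := lt_one_of_mem hv
  have hvu : Int.fract (v - u) = v - u := Int.fract_eq_self.mpr ⟨by linarith, by linarith⟩
  refine ⟨i, j, ⟨hiI, hjI, ?_⟩, ?_⟩
  · intro e heI
    rw [valA_eq_cv, valA_eq_cv, hi, hj, hvu, if_neg (by intro h; rw [h] at hvu; linarith)]
    have he0 : (0:ℝ) ≤ Int.fract ((e:ℝ)*α) := Int.fract_nonneg _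
    have he1 : Int.fract ((e:ℝ)*α) < 1 := Int.fract_lt_one _
    have heD : Int.fract ((e:ℝ)*α) ∈ DFin α N := mem_DFin.mpr ⟨e, heI, rfl⟩
    set y := Int.fract ((e:ℝ)*α) with hy
    split_ifs with h
    · linarith
    · rcases hadj y heD with hyu | hvy
      · rcases eq_or_lt_of_le hyu with hyu' | hyu'
        · exfalso; apply h; rw [hyu']; simp
        · have : Int.fract (y - u) = y - u + 1 := by
            rw [← Int.fract_add_one]
            exact Int.fract_eq_self.mpr ⟨by linarith, by linarith⟩
          rw [this]; linarith
      · have : Int.fract (y - u) = y - u :=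
          Int.fract_eq_self.mpr ⟨by linarith, by linarith⟩
        rw [this]; linarith
  · rw [valA_eq_cv, hi, hj, hvu, if_neg (by intro h; linarith)]

/-- the wrap-around gap of `DFin` realizes a circular successor distance. -/
lemma wrap_succ (hne : (DFin α N).Nonempty) :
    ∃ i j, SuccI α N i j ∧
      (DFin α N).min' hne + 1 - (DFin α N).max' hne = valA α (j - i) := by
  set u₀ := (DFin α N).min' hne with hu₀
  set u₁ := (DFin α N).max' hne with hu₁
  obtain ⟨j, hjI, hj⟩ := mem_DFin.mp ((DFin α N).min'_mem hne)
  obtain ⟨i, hiI, hi⟩ := mem_DFin.mp ((DFin α N).max'_mem hne)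
  rw [← hu₀] at hj
  rw [← hu₁] at hi
  have h01 : u₀ ≤ u₁ := Finset.min'_le _ _ ((DFin α N).max'_mem hne)
  have hu00 : 0 ≤ u₀ := nonneg_of_mem ((DFin α N).min'_mem hne)
  have hu11 : u₁ < 1 := lt_one_of_mem ((DFin α N).max'_mem hne)
  have hwrap : valA α (j - i) = u₀ + 1 - u₁ := by
    rw [valA_eq_cv, hi, hj]
    rcases eq_or_lt_of_le h01 with heq | hlt
    · rw [heq, sub_self, Int.fract_zero, if_pos rfl]; ring
    · have hfr : Int.fract (u₀ - u₁) = u₀ - u₁ + 1 := by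
        rw [← Int.fract_add_one]
        exact Int.fract_eq_self.mpr ⟨by linarith, by linarith⟩
      rw [hfr, if_neg (by intro h; linarith)]
      ring
  refine ⟨i, j, ⟨hiI, hjI, ?_⟩, hwrap.symm⟩
  intro e heI
  rw [hwrap, valA_eq_cv, hi]
  have he0 : (0:ℝ) ≤ Int.fract ((e:ℝ)*α) := Int.fract_nonneg _
  have heD : Int.fract ((e:ℝ)*α) ∈ DFin α N := mem_DFin.mpr ⟨e, heI, rfl⟩
  set y := Int.fract ((e:ℝ)*α) with hy
  have hyle : y ≤ u₁ := Finset.le_max' _ _ heD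
  have hyge : u₀ ≤ y := Finset.min'_le _ _ heD
  split_ifs with h
  · linarith
  · rcases eq_or_lt_of_le hyle with hyu' | hyu'
    · exact absurd (by rw [hyu', sub_self, Int.fract_zero]) h
    · have hfr : Int.fract (y - u₁) = y - u₁ + 1 := by
        rw [← Int.fract_add_one]
        exact Int.fract_eq_self.mpr ⟨by linarith, by linarith⟩
      rw [hfr]; linarith

/-- export: a ≤3-element set containing all adjacent gaps and the wrap gap of `DFin`. -/
theorem gap_lengths (α : ℝ) (N : ℕ) :
    ∃ T : Finset ℝ, T.card ≤ 3 ∧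
      (∀ u v : ℝ, u ∈ DFin α N → v ∈ DFin α N → u < v →
        (∀ w ∈ DFin α N, w ≤ u ∨ v ≤ w) → v - u ∈ T) ∧
      (∀ hne : (DFin α N).Nonempty,
        (DFin α N).min' hne + 1 - (DFin α N).max' hne ∈ T) := by
  obtain ⟨T, hT3, hT⟩ := TGC.three_gap α N
  refine ⟨T, hT3, ?_, ?_⟩
  · intro u v hu hv huv hadj
    obtain ⟨i, j, hS, heq⟩ := adjacent_succ hu hv huv hadj
    rw [heq]; exact hT i j hS
  · intro hne
    obtain ⟨i, j, hS, heq⟩ := wrap_succ hne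
    rw [heq]; exact hT i j hS

end DF

section Pieces

variable {ℓ : ℕ} {t : ℕ → ℝ}

lemma t_lt (htmono : ∀ i < ℓ, t i < t (i + 1)) :
    ∀ p q, p < q → q ≤ ℓ → t p < t q := by
  intro p q
  induction q with
  | zero => omega
  | succ q IH =>
    intro hpq hq
    rcases Nat.lt_or_ge p q with h | h
    · exact lt_trans (IH h (by omega)) (htmono q (by omega))
    · have : p = q := by omega
      rw [this]
      exact htmono q (by omega)

lemma t_nonneg (ht0 : t 0 = 0) (htmono : ∀ i < ℓ, t i < t (i + 1)) {p : ℕ} (hp : p ≤ ℓ) :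
    0 ≤ t p := by
  rcases Nat.eq_zero_or_pos p with h | h
  · rw [h, ht0]
  · rw [← ht0]; exact (t_lt htmono 0 p h hp).le

lemma t_le_one (htl : t ℓ = 1) (htmono : ∀ i < ℓ, t i < t (i + 1)) {p : ℕ} (hp : p ≤ ℓ) :
    t p ≤ 1 := by
  rcases Nat.eq_or_lt_of_le hp with h | h
  · rw [h, htl]
  · rw [← htl]; exact (t_lt htmono p ℓ h (le_refl ℓ)).le

lemma exists_piece (hl : 0 < ℓ) (ht0 : t 0 = 0) (htl : t ℓ = 1)
    (htmono : ∀ i < ℓ, t i < t (i + 1)) {x : ℝ} (hx : 0 ≤ x) (hx1 : x < 1) :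
    ∃ p < ℓ, t p ≤ x ∧ x < t (p+1) := by
  classical
  set S := (Finset.range ℓ).filter (fun i => t i ≤ x) with hS
  have hSne : S.Nonempty := ⟨0, by simp [hS, Finset.mem_filter, hl, ht0, hx]⟩
  set p := S.max' hSne with hp
  have hpS : p ∈ S := S.max'_mem hSne
  simp only [hS, Finset.mem_filter, Finset.mem_range] at hpS
  refine ⟨p, hpS.1, hpS.2, ?_⟩
  by_contra hcon
  push_neg at hcon
  have hp1 : p + 1 < ℓ := by
    rcases Nat.eq_or_lt_of_le (Nat.succ_le_of_lt hpS.1) with h | h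
    · exfalso
      have : t (p + 1) = 1 := by rw [show p + 1 = ℓ by omega, htl]
      rw [this] at hcon; linarith
    · exact h
  have : p + 1 ∈ S := by simp [hS, Finset.mem_filter, Finset.mem_range, hp1, hcon]
  have := S.le_max' _ this
  omega

end Pieces

section FSide

variable {f : ℝ → ℝ}

lemma f_fract (hper : ∀ x, f (x + 1) = f x) (x : ℝ) : f (Int.fract x) = f x := by
  have hper1 : Function.Periodic f 1 := hper
  rw [Int.fract]
  have := hper1.sub_int_mul_eq (x := x) (n := ⌊x⌋)
  rwa [mul_one] at this

lemma orbit_eq (hper : ∀ x, f (x + 1) = f x) (α : ℝ) (N : ℕ) :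
    orbitSet f α 0 N = ↑((DFin α N).image f) := by
  ext y
  simp only [orbitSet, Set.mem_setOf_eq, Finset.coe_image, Set.mem_image, Finset.mem_coe]
  constructor
  · rintro ⟨d, hd1, hdN, rfl⟩
    refine ⟨Int.fract ((d:ℝ) * α), ?_, ?_⟩
    · exact DF.mem_DFin.mpr ⟨(d:ℤ), by
        simp only [IdxI, Finset.mem_Icc]
        constructor
        · exact_mod_cast hd1
        · exact_mod_cast hdN, by push_cast; ring_nf⟩
    · rw [add_zero]
      exact f_fract hper _
  · rintro ⟨u, hu, rfl⟩
    obtain ⟨d, hdI, hd⟩ := DF.mem_DFin.mp hu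
    simp only [IdxI, Finset.mem_Icc] at hdI
    refine ⟨d.toNat, by omega, by omega, ?_⟩
    rw [add_zero, ← hd, f_fract hper]
    congr 1
    rw [show ((d.toNat : ℕ) : ℝ) = ((d:ℤ) : ℝ) by
      rw [← Int.cast_natCast, Int.toNat_of_nonneg (by omega : (0:ℤ) ≤ d)]]

lemma range_eq (hper : ∀ x, f (x + 1) = f x) :
    Set.range f = f '' Set.Ico (0:ℝ) 1 := by
  ext y
  constructor
  · rintro ⟨x, rfl⟩
    exact ⟨Int.fract x, ⟨Int.fract_nonneg x, Int.fract_lt_one x⟩, f_fract hper x⟩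
  · rintro ⟨x, _, rfl⟩
    exact ⟨x, rfl⟩

end FSide

theorem main_mono (f : ℝ → ℝ) (hper : ∀ x, f (x + 1) = f x)
    (ℓ : ℕ) (hl : 0 < ℓ) (t m c : ℕ → ℝ)
    (ht0 : t 0 = 0) (htl : t ℓ = 1)
    (htmono : ∀ i < ℓ, t i < t (i + 1))
    (hpiece : ∀ i < ℓ, ∀ x ∈ Set.Ico (t i) (t (i + 1)), f x = m i * x + c i)
    (hinj : Set.InjOn f (Set.Ico 0 1))
    (hmono : MonotoneOn f (Set.Ico (0 : ℝ) 1))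
    (hslope : m 0 = m (ℓ - 1))
    (μ : ℕ) (hμ : μ = (Finset.image (fun i => |m i|) (Finset.range ℓ)).card)
    (α : ℝ) (N : ℕ) :
    (gapSet f α 0 N).ncard ≤ 3 * μ + ℓ - 1 := by
  classical
  have hμ1 : 1 ≤ μ := by
    rw [hμ]
    exact Finset.card_pos.mpr ((Finset.nonempty_range_iff.mpr (by omega)).image _)
  rcases Nat.eq_zero_or_pos N with hN0 | hN1
  · -- empty orbit: gap set is a singleton
    subst hN0
    have horbempty : orbitSet f α 0 0 = ∅ := by
      ext y; simp only [orbitSet, Set.mem_setOf_eq, Set.mem_empty_iff_false, iff_false]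
      rintro ⟨d, h1, h2, _⟩; omega
    have hcons : consGaps (∅ : Set ℝ) = ∅ := by
      ext g; simp [consGaps]
    rw [gapSet, horbempty, hcons, Set.empty_union, Set.ncard_singleton]
    omega
  -- main case: N ≥ 1
  have hsm : ∀ {x y : ℝ}, x ∈ Set.Ico (0:ℝ) 1 → y ∈ Set.Ico (0:ℝ) 1 → x < y → f x < f y := by
    intro x y hx hy hxy
    rcases eq_or_lt_of_le (hmono hx hy hxy.le) with h | h
    · exact absurd (hinj hx hy h) (ne_of_lt hxy)
    · exact h
  have hm_pos : ∀ p < ℓ, 0 < m p := by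
    intro p hp
    set x1 := t p with hx1
    set x2 := (t p + t (p+1))/2 with hx2
    have ht12 := htmono p hp
    have h1le : x1 < x2 := by rw [hx1, hx2]; linarith
    have h2lt : x2 < t (p+1) := by rw [hx2]; linarith
    have hx1m : x1 ∈ Set.Ico (0:ℝ) 1 := by
      constructor
      · exact t_nonneg ht0 htmono (by omega)
      · calc x1 < t (p+1) := ht12
          _ ≤ 1 := t_le_one htl htmono (by omega)
    have hx2m : x2 ∈ Set.Ico (0:ℝ) 1 := by
      constructor
      · linarith [hx1m.1]
      · calc x2 < t (p+1) := h2lt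
          _ ≤ 1 := t_le_one htl htmono (by omega)
    have hf1 : f x1 = m p * x1 + c p := hpiece p hp x1 ⟨le_refl _, ht12⟩
    have hf2 : f x2 = m p * x2 + c p := hpiece p hp x2 ⟨by linarith, h2lt⟩
    have := hsm hx1m hx2m h1le
    rw [hf1, hf2] at this
    nlinarith
  have hf0 : f 0 = c 0 := by
    have h01 : (0:ℝ) ∈ Set.Ico (t 0) (t 1) := by
      rw [ht0]
      exact ⟨le_refl 0, by rw [← ht0]; exact htmono 0 hl⟩
    rw [hpiece 0 hl 0 h01]; ring
  have hrange := range_eq hper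
  have hInfR : sInf (Set.range f) = c 0 := by
    rw [hrange, ← hf0]
    apply IsLeast.csInf_eq
    constructor
    · exact ⟨0, ⟨le_refl 0, zero_lt_one⟩, rfl⟩
    · rintro y ⟨x, hx, rfl⟩
      exact hmono ⟨le_refl 0, zero_lt_one⟩ hx hx.1
  have htl1lt : t (ℓ-1) < 1 := by
    rw [← htl]
    exact t_lt htmono (ℓ-1) ℓ (by omega) (le_refl ℓ)
  have hpiece_last : ∀ z : ℝ, t (ℓ-1) ≤ z → z < 1 → f z = m (ℓ-1) * z + c (ℓ-1) := by
    intro z h1 h2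
    apply hpiece (ℓ-1) (by omega) z
    refine ⟨h1, ?_⟩
    rw [show (ℓ-1)+1 = ℓ by omega, htl]
    exact h2
  have hSupR : sSup (Set.range f) = m (ℓ-1) + c (ℓ-1) := by
    have hmlast := hm_pos (ℓ-1) (by omega)
    apply csSup_eq_of_forall_le_of_forall_lt_exists_gt ⟨f 0, Set.mem_range_self 0⟩
    · rintro y ⟨x, rfl⟩
      rw [← f_fract hper x]
      set x' := Int.fract x with hx'
      have hx'm : x' ∈ Set.Ico (0:ℝ) 1 := ⟨Int.fract_nonneg x, Int.fract_lt_one x⟩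
      set z := max x' (t (ℓ-1)) with hz
      have hzm : z ∈ Set.Ico (0:ℝ) 1 := by
        constructor
        · exact le_trans hx'm.1 (le_max_left _ _)
        · exact max_lt hx'm.2 htl1lt
      have h1 : f x' ≤ f z := hmono hx'm hzm (le_max_left _ _)
      have h2 : f z = m (ℓ-1) * z + c (ℓ-1) := hpiece_last z (le_max_right _ _) hzm.2
      have : m (ℓ-1) * z ≤ m (ℓ-1) * 1 := by
        apply mul_le_mul_of_nonneg_left hzm.2.le hmlast.le
      calc f x' ≤ f z := h1
        _ = m (ℓ-1) * z + c (ℓ-1) := h2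
        _ ≤ m (ℓ-1) * 1 + c (ℓ-1) := by linarith
        _ = m (ℓ-1) + c (ℓ-1) := by ring
    · intro w hw
      set q := max (t (ℓ-1)) ((w - c (ℓ-1))/(m (ℓ-1))) with hq
      have hmlast := hm_pos (ℓ-1) (by omega)
      have hq1 : q < 1 := by
        apply max_lt htl1lt
        rw [div_lt_one hmlast]
        linarith
      set z' := (q + 1)/2 with hz'
      have hz'q : q < z' := by rw [hz']; linarith
      have hz'1 : z' < 1 := by rw [hz']; linarith
      have hz'tl : t (ℓ-1) ≤ z' := le_trans (le_max_left _ _) hz'q.le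
      refine ⟨f z', ⟨z', rfl⟩, ?_⟩
      rw [hpiece_last z' hz'tl hz'1]
      have : (w - c (ℓ-1))/(m (ℓ-1)) < z' := lt_of_le_of_lt (le_max_right _ _) hz'q
      rw [div_lt_iff₀ hmlast] at this
      nlinarith
  have hgapformula : ∀ u v : ℝ, 0 ≤ u → u ≤ v → v < 1 →
      (∀ k, 1 ≤ k → k ≤ ℓ - 1 → t k ∉ Set.Ioc u v) →
      ∃ p < ℓ, t p ≤ u ∧ f v - f u = m p * (v - u) := by
    intro u v hu0 huv hv1 hnb
    obtain ⟨p, hp, hpu, hpu1⟩ := exists_piece hl ht0 htl htmono hu0 (lt_of_le_of_lt huv hv1)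
    have hvp : v < t (p+1) := by
      by_contra hcon
      push_neg at hcon
      have hp1 : p + 1 ≤ ℓ - 1 := by
        rcases Nat.eq_or_lt_of_le (Nat.succ_le_of_lt hp) with h | h
        · exfalso
          have : t (p+1) = 1 := by rw [show p + 1 = ℓ by omega, htl]
          rw [this] at hcon; linarith
        · omega
      exact hnb (p+1) (by omega) hp1 ⟨hpu1, hcon⟩
    have hfu : f u = m p * u + c p := hpiece p hp u ⟨hpu, hpu1⟩
    have hfv : f v = m p * v + c p := hpiece p hp v ⟨le_trans hpu huv, hvp⟩
    exact ⟨p, hp, hpu, by rw [hfu, hfv]; ring⟩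
  -- set up the orbit as a finite set
  have horb := orbit_eq hper α N
  have hDmem : ∀ u ∈ DFin α N, u ∈ Set.Ico (0:ℝ) 1 :=
    fun u hu => ⟨DF.nonneg_of_mem hu, DF.lt_one_of_mem hu⟩
  have hDne : (DFin α N).Nonempty := by
    refine ⟨Int.fract α, DF.mem_DFin.mpr ⟨1, ?_, by norm_num⟩⟩
    simp only [IdxI, Finset.mem_Icc]
    omega
  set u₀ := (DFin α N).min' hDne with hu₀
  set u₁ := (DFin α N).max' hDne with hu₁
  have hu₀D : u₀ ∈ DFin α N := (DFin α N).min'_mem hDne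
  have hu₁D : u₁ ∈ DFin α N := (DFin α N).max'_mem hDne
  have hInfO : sInf (orbitSet f α 0 N) = f u₀ := by
    rw [horb]
    apply IsLeast.csInf_eq
    constructor
    · exact Finset.mem_coe.mpr (Finset.mem_image_of_mem f hu₀D)
    · rintro y hy
      obtain ⟨w, hw, rfl⟩ := Finset.mem_image.mp (Finset.mem_coe.mp hy)
      exact hmono (hDmem _ hu₀D) (hDmem _ hw) (Finset.min'_le _ _ hw)
  have hSupO : sSup (orbitSet f α 0 N) = f u₁ := by
    rw [horb]
    apply IsGreatest.csSup_eq
    constructor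
    · exact Finset.mem_coe.mpr (Finset.mem_image_of_mem f hu₁D)
    · rintro y hy
      obtain ⟨w, hw, rfl⟩ := Finset.mem_image.mp (Finset.mem_coe.mp hy)
      exact hmono (hDmem _ hw) (hDmem _ hu₁D) (Finset.le_max' _ _ hw)
  obtain ⟨T, hT3, hTadj, hTwrap⟩ := DF.gap_lengths α N
  set MS := (Finset.range ℓ).image (fun i => |m i|) with hMS
  set A := (MS ×ˢ T).image (fun p : ℝ × ℝ => p.1 * p.2) with hA
  have hAcard : A.card ≤ μ * 3 := by
    calc A.card ≤ (MS ×ˢ T).card := Finset.card_image_le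
      _ = MS.card * T.card := Finset.card_product _ _
      _ ≤ μ * 3 := Nat.mul_le_mul (by rw [hμ]) hT3
  set X := sInf (orbitSet f α 0 N) - sInf (Set.range f) + sSup (Set.range f) -
      sSup (orbitSet f α 0 N) with hX
  set C : ℕ → Set ℝ := fun k => {x | (∃ u v, u ∈ DFin α N ∧ v ∈ DFin α N ∧ u < v ∧
      (∀ w ∈ DFin α N, w ≤ u ∨ v ≤ w) ∧ t k ∈ Set.Ioc u v ∧ x = f v - f u) ∨
      ((t k ∈ Set.Ioc u₁ 1 ∨ t k ∈ Set.Ioc 0 u₀) ∧ x = X)} with hC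
  have hCsub : ∀ k, (C k).Subsingleton := by
    intro k x hx y hy
    simp only [hC, Set.mem_setOf_eq] at hx hy
    rcases hx with ⟨u, v, huD, hvD, huv, hadj, htk, rfl⟩ | ⟨htk, rfl⟩
    · rcases hy with ⟨u', v', hu'D, hv'D, hu'v', hadj', htk', rfl⟩ | ⟨htk', rfl⟩
      · have huu' : u = u' := by
          rcases lt_trichotomy u u' with h | h | h
          · exfalso
            rcases hadj u' hu'D with hle | hge
            · linarith
            · linarith [htk.2, htk'.1]
          · exact h
          · exfalso
            rcases hadj' u huD with hle | hge
            · linarith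
            · linarith [htk'.2, htk.1]
        subst huu'
        have hvv' : v = v' := by
          have h1 : v' ≤ v := by
            rcases hadj' v hvD with hle | hge
            · exfalso; linarith
            · exact hge
          have h2 : v ≤ v' := by
            rcases hadj v' hv'D with hle | hge
            · exfalso; linarith
            · exact hge
          linarith
        rw [hvv']
      · exfalso
        rcases htk' with h | h
        · have := Finset.le_max' _ _ hvD
          rw [← hu₁] at this
          linarith [htk.2, h.1]
        · have := Finset.min'_le _ _ huD
          rw [← hu₀] at this
          linarith [htk.1, h.2]
    · rcases hy with ⟨u', v', hu'D, hv'D, hu'v', hadj', htk', rfl⟩ | ⟨htk', rfl⟩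
      · exfalso
        rcases htk with h | h
        · have := Finset.le_max' _ _ hv'D
          rw [← hu₁] at this
          linarith [htk'.2, h.1]
        · have := Finset.min'_le _ _ hu'D
          rw [← hu₀] at this
          linarith [htk'.1, h.2]
      · rfl
  have hgap_to_pair : ∀ g ∈ consGaps (orbitSet f α 0 N), ∃ u v, u ∈ DFin α N ∧ v ∈ DFin α N ∧
      u < v ∧ (∀ w ∈ DFin α N, w ≤ u ∨ v ≤ w) ∧ g = f v - f u := by
    intro g hg
    obtain ⟨a, ha, b, hb, hab, hadj, rfl⟩ := hg
    rw [horb] at ha hb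
    obtain ⟨u, huD, rfl⟩ := Finset.mem_image.mp (Finset.mem_coe.mp ha)
    obtain ⟨v, hvD, rfl⟩ := Finset.mem_image.mp (Finset.mem_coe.mp hb)
    have huv : u < v := by
      rcases lt_trichotomy u v with h | h | h
      · exact h
      · exfalso; rw [h] at hab; exact lt_irrefl _ hab
      · exfalso; linarith [hsm (hDmem _ hvD) (hDmem _ huD) h]
    refine ⟨u, v, huD, hvD, huv, ?_, rfl⟩
    intro w hwD
    have hwO : f w ∈ orbitSet f α 0 N := by
      rw [horb]
      exact Finset.mem_coe.mpr (Finset.mem_image_of_mem f hwD)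
    rcases hadj (f w) hwO with h | h
    · left
      by_contra hcon
      push_neg at hcon
      linarith [hsm (hDmem _ huD) (hDmem _ hwD) hcon]
    · right
      by_contra hcon
      push_neg at hcon
      linarith [hsm (hDmem _ hwD) (hDmem _ hvD) hcon]
  set B := (Finset.Icc 1 (ℓ-1)).image
    (fun k => if h : (C k).Nonempty then h.some else 0) with hB
  have hmemB : ∀ x : ℝ, ∀ k, 1 ≤ k → k ≤ ℓ - 1 → x ∈ C k → x ∈ ↑(A ∪ B) := by
    intro x k h1 h2 hxC
    have hne : (C k).Nonempty := ⟨x, hxC⟩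
    apply Finset.mem_coe.mpr
    apply Finset.mem_union_right
    rw [hB]
    apply Finset.mem_image.mpr
    refine ⟨k, Finset.mem_Icc.mpr ⟨h1, h2⟩, ?_⟩
    rw [dif_pos hne]
    exact (hCsub k) hne.some_mem hxC
  have hcover : gapSet f α 0 N ⊆ ↑(A ∪ B) := by
    intro x hx
    rcases hx with hg | hxX
    · -- interior gap
      obtain ⟨u, v, huD, hvD, huv, hadj, rfl⟩ := hgap_to_pair x hg
      by_cases hbk : ∃ k, 1 ≤ k ∧ k ≤ ℓ-1 ∧ t k ∈ Set.Ioc u v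
      · obtain ⟨k, h1, h2, h3⟩ := hbk
        apply hmemB _ k h1 h2
        simp only [hC, Set.mem_setOf_eq]
        exact Or.inl ⟨u, v, huD, hvD, huv, hadj, h3, rfl⟩
      · push_neg at hbk
        obtain ⟨p, hp, _, heq⟩ := hgapformula u v (hDmem _ huD).1 huv.le (hDmem _ hvD).2
          (fun k hk1 hk2 => hbk k hk1 hk2)
        apply Finset.mem_coe.mpr
        apply Finset.mem_union_left
        rw [hA]
        apply Finset.mem_image.mpr
        refine ⟨(|m p|, v - u), ?_, ?_⟩
        · apply Finset.mem_product.mpr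
          exact ⟨Finset.mem_image_of_mem _ (Finset.mem_range.mpr hp),
            hTadj u v huD hvD huv hadj⟩
        · simp only
          rw [heq, abs_of_pos (hm_pos p hp)]
    · -- the extremal gap
      have hxeq : x = X := by
        rw [hX]; exact hxX
      by_cases hbk : ∃ k, 1 ≤ k ∧ k ≤ ℓ-1 ∧ (t k ∈ Set.Ioc u₁ 1 ∨ t k ∈ Set.Ioc 0 u₀)
      · obtain ⟨k, h1, h2, h3⟩ := hbk
        apply hmemB _ k h1 h2
        simp only [hC, Set.mem_setOf_eq]
        exact Or.inr ⟨h3, hxeq⟩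
      · push_neg at hbk
        -- compute X = m 0 * (u₀ + 1 - u₁)
        have hwrapT := hTwrap hDne
        rw [← hu₀, ← hu₁] at hwrapT
        have hpart1 : f u₀ - f 0 = m 0 * u₀ := by
          obtain ⟨p, hp, htp, heq⟩ := hgapformula 0 u₀ (le_refl 0) (hDmem _ hu₀D).1
            (hDmem _ hu₀D).2 (fun k hk1 hk2 => fun hmem => (hbk k hk1 hk2).2 hmem)
          have hp0 : p = 0 := by
            by_contra hcon
            have := t_lt htmono 0 p (by omega) (by omega)
            rw [ht0] at this
            linarith
          rw [hp0] at heq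
          rw [heq]; ring
        have hpart2 : t (ℓ-1) ≤ u₁ := by
          rcases Nat.eq_or_lt_of_le hl with h | h
          · rw [show ℓ - 1 = 0 by omega, ht0]
            exact (hDmem _ hu₁D).1
          · by_contra hcon
            push_neg at hcon
            exact (hbk (ℓ-1) (by omega) (le_refl _)).1
              ⟨hcon, t_le_one htl htmono (by omega)⟩
        have hfu₁ : f u₁ = m (ℓ-1) * u₁ + c (ℓ-1) :=
          hpiece_last u₁ hpart2 (hDmem _ hu₁D).2
        have hXval : X = m 0 * (u₀ + 1 - u₁) := by
          rw [hX, hInfO, hInfR, hSupR, hSupO, hfu₁]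
          have : f u₀ = m 0 * u₀ + c 0 := by rw [← hf0]; linarith [hpart1]
          rw [this, hslope]
          ring
        apply Finset.mem_coe.mpr
        apply Finset.mem_union_left
        rw [hA]
        apply Finset.mem_image.mpr
        refine ⟨(|m 0|, u₀ + 1 - u₁), ?_, ?_⟩
        · apply Finset.mem_product.mpr
          exact ⟨Finset.mem_image_of_mem _ (Finset.mem_range.mpr hl), hwrapT⟩
        · simp only
          rw [hxeq, hXval, abs_of_pos (hm_pos 0 hl)]
  calc (gapSet f α 0 N).ncard ≤ (↑(A ∪ B) : Set ℝ).ncard :=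
        Set.ncard_le_ncard hcover (Finset.finite_toSet _)
    _ = (A ∪ B).card := Set.ncard_coe_finset _
    _ ≤ A.card + B.card := Finset.card_union_le _ _
    _ ≤ μ * 3 + (ℓ - 1) := by
        apply Nat.add_le_add hAcard
        calc B.card ≤ (Finset.Icc 1 (ℓ-1)).card := Finset.card_image_le
          _ = ℓ - 1 := by rw [Nat.card_Icc]; omega
    _ ≤ 3 * μ + ℓ - 1 := by omega

lemma consGaps_neg_subset (S : Set ℝ) : consGaps (-S) ⊆ consGaps S := by
  rintro g ⟨a, ha, b, hb, hab, hadj, rfl⟩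
  rw [Set.mem_neg] at ha hb
  refine ⟨-b, hb, -a, ha, by linarith, ?_, by ring⟩
  intro x hx
  have hx' : -x ∈ -S := by rw [Set.mem_neg, neg_neg]; exact hx
  rcases hadj (-x) hx' with h | h
  · right; linarith
  · left; linarith

lemma consGaps_neg (S : Set ℝ) : consGaps (-S) = consGaps S := by
  apply subset_antisymm (consGaps_neg_subset S)
  have := consGaps_neg_subset (-S)
  rwa [neg_neg] at this

end ThreeGapCore

/-- Tightened bound for monotone injective piecewise-linear functions whose
first and last pieces have equal slopes: `|G_{f,α,N}| ≤ 3μ + ℓ - 1`. -/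
theorem gaps_monotone_tightened (f : ℝ → ℝ) (hper : ∀ x, f (x + 1) = f x)
    (ℓ : ℕ) (hl : 0 < ℓ) (t m c : ℕ → ℝ)
    (ht0 : t 0 = 0) (htl : t ℓ = 1)
    (htmono : ∀ i < ℓ, t i < t (i + 1))
    (hpiece : ∀ i < ℓ, ∀ x ∈ Set.Ico (t i) (t (i + 1)), f x = m i * x + c i)
    (hmax : ∀ i, i + 1 < ℓ → (m i, c i) ≠ (m (i + 1), c (i + 1)))
    (hinj : Set.InjOn f (Set.Ico 0 1))
    (hmono : MonotoneOn f (Set.Ico (0 : ℝ) 1) ∨ AntitoneOn f (Set.Ico (0 : ℝ) 1))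
    (hslope : m 0 = m (ℓ - 1))
    (μ : ℕ) (hμ : μ = (Finset.image (fun i => |m i|) (Finset.range ℓ)).card)
    (α : ℝ) (N : ℕ) :
    (gapSet f α 0 N).ncard ≤ 3 * μ + ℓ - 1 := by
  classical
  rcases hmono with hm | ha
  · exact main_mono f hper ℓ hl t m c ht0 htl htmono hpiece hinj hm hslope μ hμ α N
  -- antitone case: reduce to the monotone case via `-f`
  have hμ1 : 1 ≤ μ := by
    rw [hμ]
    exact Finset.card_pos.mpr ((Finset.nonempty_range_iff.mpr (by omega)).image _)
  rcases Nat.eq_zero_or_pos N with hN0 | hN1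
  · subst hN0
    have horbempty : orbitSet f α 0 0 = ∅ := by
      ext y; simp only [orbitSet, Set.mem_setOf_eq, Set.mem_empty_iff_false, iff_false]
      rintro ⟨d, h1, h2, _⟩; omega
    have hcons : consGaps (∅ : Set ℝ) = ∅ := by
      ext g; simp [consGaps]
    rw [gapSet, horbempty, hcons, Set.empty_union, Set.ncard_singleton]
    omega
  -- N ≥ 1
  have horbneg : orbitSet (fun x => -f x) α 0 N = -(orbitSet f α 0 N) := by
    ext y
    simp only [orbitSet, Set.mem_setOf_eq, Set.mem_neg]
    constructor
    · rintro ⟨d, h1, h2, h3⟩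
      exact ⟨d, h1, h2, by rw [h3]; ring⟩
    · rintro ⟨d, h1, h2, h3⟩
      exact ⟨d, h1, h2, by rw [← h3]; ring⟩
  have hrangeneg : Set.range (fun x => -f x) = -(Set.range f) := by
    ext y
    simp only [Set.mem_range, Set.mem_neg]
    constructor
    · rintro ⟨x, rfl⟩
      exact ⟨x, by ring⟩
    · rintro ⟨x, hx⟩
      exact ⟨x, by rw [hx]; ring⟩
  have hone : (orbitSet f α 0 N).Nonempty :=
    ⟨f (1 * α + 0), ⟨1, le_refl 1, hN1, by norm_num⟩⟩
  have hofin : (orbitSet f α 0 N).Finite := by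
    rw [orbit_eq hper α N]
    exact (Finset.finite_toSet _)
  have hrne : (Set.range f).Nonempty := ⟨f 0, Set.mem_range_self 0⟩
  set Bnd := ((Finset.range ℓ).image (fun i => |m i| + |c i|)).max'
    ((Finset.nonempty_range_iff.mpr (by omega)).image _) with hBnd
  have habs : ∀ y ∈ Set.range f, |y| ≤ Bnd := by
    rintro y ⟨x, rfl⟩
    rw [← f_fract hper x]
    have hx' : Int.fract x ∈ Set.Ico (0:ℝ) 1 := ⟨Int.fract_nonneg x, Int.fract_lt_one x⟩
    obtain ⟨p, hp, hp1, hp2⟩ := exists_piece hl ht0 htl htmono hx'.1 hx'.2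
    rw [hpiece p hp _ ⟨hp1, hp2⟩]
    have h1 : |m p * Int.fract x + c p| ≤ |m p| * |Int.fract x| + |c p| := by
      calc |m p * Int.fract x + c p| ≤ |m p * Int.fract x| + |c p| := abs_add_le _ _
        _ = |m p| * |Int.fract x| + |c p| := by rw [abs_mul]
    have h2 : |Int.fract x| ≤ 1 := by
      rw [abs_of_nonneg hx'.1]; exact hx'.2.le
    have h3 : |m p| + |c p| ≤ Bnd := by
      rw [hBnd]
      exact Finset.le_max' _ _
        (Finset.mem_image_of_mem (fun i => |m i| + |c i|) (Finset.mem_range.mpr hp))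
    nlinarith [abs_nonneg (m p), abs_nonneg (c p)]
  have hrbddA : BddAbove (Set.range f) :=
    ⟨Bnd, fun y hy => le_trans (le_abs_self y) (habs y hy)⟩
  have hrbddB : BddBelow (Set.range f) :=
    ⟨-Bnd, fun y hy => by have := habs y hy; have := neg_abs_le y; linarith⟩
  have key : gapSet (fun x => -f x) α 0 N = gapSet f α 0 N := by
    unfold gapSet
    rw [horbneg, consGaps_neg, hrangeneg,
      csInf_neg hone hofin.bddAbove, csSup_neg hone hofin.bddBelow,
      csInf_neg hrne hrbddA, csSup_neg hrne hrbddB]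
    congr 1
    have : -sSup (orbitSet f α 0 N) - -sSup (Set.range f) + -sInf (Set.range f) -
        -sInf (orbitSet f α 0 N) = sInf (orbitSet f α 0 N) - sInf (Set.range f) +
        sSup (Set.range f) - sSup (orbitSet f α 0 N) := by ring
    rw [this]
  rw [← key]
  apply main_mono (fun x => -f x) (fun x => by simp [hper x]) ℓ hl t (fun i => -m i)
    (fun i => -c i) ht0 htl htmono
    (by intro i hi x hx; rw [hpiece i hi x hx]; ring)
    (by intro x hx y hy hxy; exact hinj hx hy (by simpa using neg_injective hxy))
    (by intro x hx y hy hxy; simp only [neg_le_neg_iff]; exact ha hx hy hxy)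
    (by simp only [hslope])
    μ (by simpa using hμ) α N
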